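/- arXiv:1308.6100 — 5 statements merged into one kernel-verified Lean document; each statement's English description precedes it below -/
import Mathlib

section
/- Let α, γ, μ > 0. Define G on [0, ∞) as the unique solution of the linear ODE g(t)·(α/(γμ²) + 1/μ) = 1 − G(t) with initial condition G(0) = 1/(1 + α/(γμ)), where g = G'. Then G(t) = 1 − (1/(1 + γμ/α)) · exp(−μt/(1 + α/(γμ))) and in particular G is increasing with lim_{t→∞} G(t) = 1. -/
open Real Filter Set

theorem stmt_2 (α γ μ : ℝ) (hα : 0 < α) (hγ : 0 < γ) (hμ : 0 < μ)
    (G g : ℝ → ℝ)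
    (hderiv : ∀ t ≥ (0:ℝ), HasDerivAt G (g t) t)
    (hODE : ∀ t ≥ (0:ℝ), g t * (α/(γ*μ^2) + 1/μ) = 1 - G t)
    (hG0 : G 0 = 1 / (1 + α/(γ*μ))) :
    (∀ t ≥ (0:ℝ), G t = 1 - (1/(1 + γ*μ/α)) * Real.exp (-(μ*t)/(1 + α/(γ*μ))))
      ∧ StrictMonoOn G (Set.Ici 0)
      ∧ Tendsto G atTop (nhds 1) := by
  have hγμ : 0 < γ * μ := mul_pos hγ hμ
  have hd : 0 < 1 + α / (γ * μ) := by positivity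
  have hd2 : 0 < 1 + γ * μ / α := by positivity
  set k : ℝ := μ / (1 + α / (γ * μ)) with hk
  set A : ℝ := 1 / (1 + γ * μ / α) with hA
  have hkpos : 0 < k := div_pos hμ hd
  have hApos : 0 < A := by positivity
  have hc : (α / (γ * μ ^ 2) + 1 / μ) = 1 / k := by
    rw [hk]
    field_simp
    ring
  have hg : ∀ t ≥ (0:ℝ), g t = k * (1 - G t) := by
    intro t ht
    have h := hODE t ht
    rw [hc] at h
    field_simp at h
    linarith
  set F : ℝ → ℝ := fun t => (1 - G t) * Real.exp (k * t) with hF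
  have hFd : ∀ t ≥ (0:ℝ), HasDerivAt F 0 t := by
    intro t ht
    have h1 : HasDerivAt (fun s => 1 - G s) (-(g t)) t := (hderiv t ht).const_sub 1
    have h2 : HasDerivAt (fun s => Real.exp (k * s)) (k * Real.exp (k * t)) t := by
      simpa [mul_comm] using ((hasDerivAt_id t).const_mul k).exp
    have h3 := h1.mul h2
    have h4 : HasDerivAt F (-(g t) * Real.exp (k * t) + (1 - G t) * (k * Real.exp (k * t))) t := h3
    convert h4 using 1
    rw [hg t ht]; ring
  have key : ∀ t ≥ (0:ℝ), F t = F 0 := by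
    intro t ht
    rcases eq_or_lt_of_le ht with h | h
    · rw [← h]
    · exact constant_of_has_deriv_right_zero
        (fun x hx => (hFd x hx.1).continuousAt.continuousWithinAt)
        (fun x hx => (hFd x hx.1).hasDerivWithinAt) t ⟨ht, le_refl t⟩
  have hF0 : F 0 = A := by
    simp only [hF, hG0, Real.exp_zero, mul_zero, mul_one]
    rw [hA]
    field_simp
    ring
  have hform : ∀ t ≥ (0:ℝ), G t = 1 - A * Real.exp (-(k * t)) := by
    intro t ht
    have h := key t ht
    rw [hF0] at h
    have hepos : Real.exp (k * t) ≠ 0 := (Real.exp_pos _).ne'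
    have : 1 - G t = A * Real.exp (-(k * t)) := by
      rw [Real.exp_neg, ← h]
      field_simp
      rfl
    linarith
  have hexp_eq : ∀ t : ℝ, -(μ * t) / (1 + α / (γ * μ)) = -(k * t) := by
    intro t
    rw [hk, div_mul_eq_mul_div, neg_div]
  refine ⟨?_, ?_, ?_⟩
  · intro t ht
    rw [hform t ht, hexp_eq]
  · intro a ha b hb hab
    rw [hform a ha, hform b hb]
    have : Real.exp (-(k * b)) < Real.exp (-(k * a)) := by
      apply Real.exp_lt_exp.mpr
      nlinarith
    nlinarith
  · have hlim : Tendsto (fun t : ℝ => 1 - A * Real.exp (-(k * t))) atTop (nhds 1) := by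
      have h1 : Tendsto (fun t : ℝ => -(k * t)) atTop atBot := by
        apply tendsto_neg_atTop_atBot.comp
        exact Tendsto.const_mul_atTop hkpos tendsto_id
      have h2 : Tendsto (fun t : ℝ => Real.exp (-(k * t))) atTop (nhds 0) :=
        Real.tendsto_exp_atBot.comp h1
      have := h2.const_mul A
      simpa using (tendsto_const_nhds (x := (1:ℝ)) (f := atTop)).sub this
    apply hlim.congr'
    filter_upwards [eventually_ge_atTop (0:ℝ)] with t ht
    exact (hform t ht).symm
end

section
/- Let α, γ, μ, T > 0 and define t_a(T) = −(γ/α)·(1 − exp(−μT/(1 + α/(γμ)))/(1 + γμ/α))^{-1}. Then t_a(T) < −γ/α for all T, t_a(T) is strictly increasing in T, and lim_{T→∞} t_a(T) = −γ/α. Consequently the equilibrium cost −α·t_a(T) is strictly decreasing in T and converges to γ as T → ∞. -/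
open Real Filter Set

theorem stmt_5 (α γ μ : ℝ) (hα : 0 < α) (hγ : 0 < γ) (hμ : 0 < μ)
    (ta : ℝ → ℝ)
    (hta : ∀ T : ℝ, ta T =
      -(γ/α) * (1 - Real.exp (-(μ*T)/(1 + α/(γ*μ))) / (1 + γ*μ/α))⁻¹) :
    (∀ T > (0:ℝ), ta T < -(γ/α))
      ∧ StrictMonoOn ta (Set.Ioi 0)
      ∧ Tendsto ta atTop (nhds (-(γ/α)))
      ∧ StrictAntiOn (fun T => -α * ta T) (Set.Ioi 0)
      ∧ Tendsto (fun T => -α * ta T) atTop (nhds γ) := by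
  have hA : 0 < 1 + α/(γ*μ) := by positivity
  have hc : 1 < 1 + γ*μ/α := by
    have : 0 < γ*μ/α := by positivity
    linarith
  have hc0 : (0:ℝ) < 1 + γ*μ/α := by linarith
  have hga : 0 < γ/α := by positivity
  have hD : ∀ T : ℝ, 0 < T → 0 < 1 - Real.exp (-(μ*T)/(1 + α/(γ*μ))) / (1 + γ*μ/α) ∧
      1 - Real.exp (-(μ*T)/(1 + α/(γ*μ))) / (1 + γ*μ/α) < 1 := by
    intro T hT
    have he1 : Real.exp (-(μ*T)/(1 + α/(γ*μ))) < 1 := by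
      rw [Real.exp_lt_one_iff]
      have h0 : 0 < (μ*T)/(1 + α/(γ*μ)) := by positivity
      have h1 : -(μ*T)/(1 + α/(γ*μ)) = -((μ*T)/(1 + α/(γ*μ))) := by ring
      linarith
    have he0 : 0 < Real.exp (-(μ*T)/(1 + α/(γ*μ))) := Real.exp_pos _
    constructor
    · have h : Real.exp (-(μ*T)/(1 + α/(γ*μ))) / (1 + γ*μ/α) < 1 := by
        rw [div_lt_one hc0]; linarith
      linarith
    · have h : 0 < Real.exp (-(μ*T)/(1 + α/(γ*μ))) / (1 + γ*μ/α) := by positivity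
      linarith
  have h1 : ∀ T > (0:ℝ), ta T < -(γ/α) := by
    intro T hT
    rw [hta]
    obtain ⟨hD0, hD1⟩ := hD T hT
    have hinv : 1 < (1 - Real.exp (-(μ*T)/(1 + α/(γ*μ))) / (1 + γ*μ/α))⁻¹ :=
      (one_lt_inv₀ hD0).mpr hD1
    nlinarith
  have h2 : StrictMonoOn ta (Set.Ioi 0) := by
    intro x hx y hy hxy
    rw [hta, hta]
    obtain ⟨hDx0, _⟩ := hD x hx
    obtain ⟨hDy0, _⟩ := hD y hy
    have he : Real.exp (-(μ*y)/(1 + α/(γ*μ))) < Real.exp (-(μ*x)/(1 + α/(γ*μ))) := by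
      apply Real.exp_lt_exp.mpr
      gcongr
    have hDxy : 1 - Real.exp (-(μ*x)/(1 + α/(γ*μ))) / (1 + γ*μ/α)
        < 1 - Real.exp (-(μ*y)/(1 + α/(γ*μ))) / (1 + γ*μ/α) := by
      gcongr
    have hinv : (1 - Real.exp (-(μ*y)/(1 + α/(γ*μ))) / (1 + γ*μ/α))⁻¹
        < (1 - Real.exp (-(μ*x)/(1 + α/(γ*μ))) / (1 + γ*μ/α))⁻¹ := by
      exact inv_strictAnti₀ hDx0 hDxy
    nlinarith
  have hlim : Tendsto ta atTop (nhds (-(γ/α))) := by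
    have hlin : Tendsto (fun T : ℝ => -(μ*T)/(1 + α/(γ*μ))) atTop atBot := by
      apply Tendsto.atBot_div_const hA
      have h : Tendsto (fun T : ℝ => μ*T) atTop atTop :=
        (tendsto_id.const_mul_atTop hμ)
      exact tendsto_neg_atTop_atBot.comp h
    have hexp : Tendsto (fun T : ℝ => Real.exp (-(μ*T)/(1 + α/(γ*μ)))) atTop (nhds 0) :=
      Real.tendsto_exp_atBot.comp hlin
    have : Tendsto (fun T : ℝ =>
        -(γ/α) * (1 - Real.exp (-(μ*T)/(1 + α/(γ*μ))) / (1 + γ*μ/α))⁻¹) atTop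
        (nhds (-(γ/α) * (1 - 0 / (1 + γ*μ/α))⁻¹)) := by
      apply Tendsto.const_mul
      apply Tendsto.inv₀
      · exact ((tendsto_const_nhds).sub (hexp.div_const _))
      · simp
    have heq : ta = fun T : ℝ =>
        -(γ/α) * (1 - Real.exp (-(μ*T)/(1 + α/(γ*μ))) / (1 + γ*μ/α))⁻¹ := funext hta
    rw [heq]
    convert this using 2
    simp
  refine ⟨h1, h2, hlim, ?_, ?_⟩
  · intro x hx y hy hxy
    have := h2 hx hy hxy
    simp only
    nlinarith
  · have : Tendsto (fun T => -α * ta T) atTop (nhds (-α * -(γ/α))) :=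
      hlim.const_mul _
    convert this using 2
    field_simp
end

section
/- Let α, γ, μ, T > 0 with (α/μ)·(1 − 2e^{−μT}) > γ. Define t^e = −(1/μ)·log((1/2)(1 − γμ/α)) and p₀ = 2 / (1 + α/(γμ) − (α/(γμ) − 1)·exp(−(μ/(1 + α/(γμ)))·(T − t^e))). Then 0 < t^e < T and 0 < p₀ < 1. -/
open Real

theorem stmt_7 (α γ μ T : ℝ) (hα : 0 < α) (hγ : 0 < γ) (hμ : 0 < μ) (hT : 0 < T)
    (hcond : (α/μ) * (1 - 2 * Real.exp (-μ*T)) > γ)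
    (te p₀ : ℝ)
    (hte : te = -(1/μ) * Real.log ((1/2) * (1 - γ*μ/α)))
    (hp₀ : p₀ = 2 / (1 + α/(γ*μ) - (α/(γ*μ) - 1) *
      Real.exp (-(μ/(1 + α/(γ*μ))) * (T - te)))) :
    (0 < te ∧ te < T) ∧ (0 < p₀ ∧ p₀ < 1) := by
  have hE := Real.exp_pos (-μ*T)
  -- from hcond : γ*μ < α*(1 - 2exp(-μT))
  have key : γ*μ < α*(1 - 2*Real.exp (-μ*T)) := by
    have h := hcond
    rw [gt_iff_lt, div_mul_eq_mul_div, lt_div_iff₀ hμ] at h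
    nlinarith
  set c := (1/2) * (1 - γ*μ/α) with hc
  have hxa : γ*μ/α < 1 - 2*Real.exp (-μ*T) := by
    rw [div_lt_iff₀ hα]; nlinarith
  have hc1 : Real.exp (-μ*T) < c := by
    rw [hc]; nlinarith
  have hc_pos : 0 < c := lt_trans hE hc1
  have hc_half : c < 1/2 := by
    have : 0 < γ*μ/α := by positivity
    rw [hc]; nlinarith
  have hlog : Real.log c < 0 := Real.log_neg hc_pos (by linarith)
  have hlog2 : -μ*T < Real.log c := by
    have := Real.log_lt_log hE hc1
    rwa [Real.log_exp] at this
  have hinv : 0 < 1/μ := by positivity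
  have hmul : (1/μ) * μ = 1 := by field_simp
  have hte0 : 0 < te := by
    rw [hte]
    nlinarith [mul_pos hinv (neg_pos.mpr hlog)]
  have hteT : te < T := by
    rw [hte]
    nlinarith [mul_lt_mul_of_pos_left hlog2 hinv]
  -- p₀ part
  have hγμ : 0 < γ*μ := mul_pos hγ hμ
  have hr : 1 < α/(γ*μ) := by
    rw [lt_div_iff₀ hγμ]
    nlinarith
  set r := α/(γ*μ) with hrdef
  have hr1 : 0 < 1 + r := by linarith
  have hexp_neg : -(μ/(1 + r)) * (T - te) < 0 := by
    have h1 : 0 < μ/(1+r) := div_pos hμ hr1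
    have h2 : 0 < T - te := by linarith
    nlinarith
  set E := Real.exp (-(μ/(1 + r)) * (T - te)) with hEdef
  have hE0 : 0 < E := Real.exp_pos _
  have hE1 : E < 1 := Real.exp_lt_one_iff.mpr hexp_neg
  have hD : 2 < 1 + r - (r - 1) * E := by nlinarith
  refine ⟨⟨hte0, hteT⟩, ?_, ?_⟩
  · rw [hp₀]; positivity
  · rw [hp₀, div_lt_one (by linarith)]; linarith
end

section
/- Let N ≥ 1, α, γ, μ > 0 with α/μ > γ, and set p₀ = γ/(γ + α/μ). Then the equation (N p₀/2)(γ + α/μ) = N p₀ γ + (α/μ)·q_{p₀}(t) has a unique solution t = t_e in (0, ∞), where q_p(t) is the expected queue size function defined by q_p(t) = Σ_{j=0}^{N} C(N,j) p^j (1−p)^{N−j} Σ_{i=0}^{j} (j−i) e^{−μt}(μt)^i/i!. -/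
open Real Finset

private lemma pterm_deriv0 (μ t : ℝ) :
    HasDerivAt (fun s => Real.exp (-μ*s) * (μ*s)^0 / Nat.factorial 0)
      (-μ * (Real.exp (-μ*t) * (μ*t)^0 / Nat.factorial 0)) t := by
  have hexp : HasDerivAt (fun s => Real.exp (-μ*s)) (Real.exp (-μ*t) * (-μ)) t := by
    have h1 : HasDerivAt (fun s : ℝ => -μ * s) (-μ) t := by
      simpa using (hasDerivAt_id t).const_mul (-μ)
    exact h1.exp
  have hfe : (fun s : ℝ => Real.exp (-μ*s) * (μ*s)^0 / Nat.factorial 0)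
      = fun s => Real.exp (-μ*s) := by funext s; simp
  rw [hfe]
  convert hexp using 1
  simp only [pow_zero, Nat.factorial_zero, Nat.cast_one, mul_one, div_one]
  ring

private lemma pterm_deriv (μ : ℝ) (i : ℕ) (t : ℝ) :
    HasDerivAt (fun s => Real.exp (-μ*s) * (μ*s)^(i+1) / Nat.factorial (i+1))
      (μ * (Real.exp (-μ*t) * (μ*t)^i / Nat.factorial i
            - Real.exp (-μ*t) * (μ*t)^(i+1) / Nat.factorial (i+1))) t := by
  have hlin : HasDerivAt (fun s : ℝ => μ * s) μ t := by
    simpa using (hasDerivAt_id t).const_mul μ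
  have hexp : HasDerivAt (fun s => Real.exp (-μ*s)) (Real.exp (-μ*t) * (-μ)) t := by
    have h1 : HasDerivAt (fun s : ℝ => -μ * s) (-μ) t := by
      simpa using (hasDerivAt_id t).const_mul (-μ)
    exact h1.exp
  have hpow : HasDerivAt (fun s => (μ*s)^(i+1)) (((i:ℝ)+1) * (μ*t)^i * μ) t := by
    have := hlin.fun_pow (i+1)
    simpa using this
  have hmain := (hexp.fun_mul hpow).div_const (Nat.factorial (i+1) : ℝ)
  refine hmain.congr_deriv ?_
  have hfac : (Nat.factorial (i+1) : ℝ) = ((i:ℝ)+1) * Nat.factorial i := by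
    rw [Nat.factorial_succ]; push_cast; ring
  have h1 : (Nat.factorial i : ℝ) ≠ 0 := Nat.cast_ne_zero.2 (Nat.factorial_ne_zero i)
  have h2 : ((i:ℝ)+1) ≠ 0 := by positivity
  rw [hfac, pow_succ]
  field_simp
  ring

private lemma cdf_deriv (μ : ℝ) (j : ℕ) (t : ℝ) :
    HasDerivAt (fun s => ∑ i ∈ Finset.range (j+1),
        Real.exp (-μ*s) * (μ*s)^i / Nat.factorial i)
      (-μ * (Real.exp (-μ*t) * (μ*t)^j / Nat.factorial j)) t := by
  induction j with
  | zero => simpa using pterm_deriv0 μ t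
  | succ k ih =>
    have h := ih.fun_add (pterm_deriv μ k t)
    have hfe : (fun s => ∑ i ∈ Finset.range (k+2),
        Real.exp (-μ*s) * (μ*s)^i / Nat.factorial i)
        = fun s => (∑ i ∈ Finset.range (k+1),
            Real.exp (-μ*s) * (μ*s)^i / Nat.factorial i)
            + Real.exp (-μ*s) * (μ*s)^(k+1) / Nat.factorial (k+1) := by
      funext s; rw [Finset.sum_range_succ]
    rw [hfe]
    refine h.congr_deriv ?_
    ring

private lemma inner_deriv (μ : ℝ) (j : ℕ) (t : ℝ) :
    HasDerivAt (fun s => ∑ i ∈ Finset.range (j+1),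
        ((j:ℝ) - (i:ℝ)) * (Real.exp (-μ*s) * (μ*s)^i / Nat.factorial i))
      (-μ * ∑ i ∈ Finset.range j,
        Real.exp (-μ*t) * (μ*t)^i / Nat.factorial i) t := by
  induction j with
  | zero =>
    have hfz : (fun s : ℝ => ∑ i ∈ Finset.range (0+1),
        (((0:ℕ):ℝ) - (i:ℝ)) * (Real.exp (-μ*s) * (μ*s)^i / Nat.factorial i)) = fun _ => 0 := by
      funext s; simp
    rw [hfz]
    simpa using hasDerivAt_const t (0:ℝ)
  | succ k ih =>
    have hfe : (fun s => ∑ i ∈ Finset.range (k+1+1),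
          (((k:ℝ)+1) - (i:ℝ)) * (Real.exp (-μ*s) * (μ*s)^i / Nat.factorial i))
        = fun s => (∑ i ∈ Finset.range (k+1),
            ((k:ℝ) - (i:ℝ)) * (Real.exp (-μ*s) * (μ*s)^i / Nat.factorial i))
          + ∑ i ∈ Finset.range (k+1),
            Real.exp (-μ*s) * (μ*s)^i / Nat.factorial i := by
      funext s
      rw [Finset.sum_range_succ, ← Finset.sum_add_distrib]
      have hz : (((k:ℝ)+1) - ((k+1:ℕ):ℝ)) *
          (Real.exp (-μ*s) * (μ*s)^(k+1) / Nat.factorial (k+1)) = 0 := by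
        push_cast; ring
      rw [hz, add_zero]
      apply Finset.sum_congr rfl
      intro i _
      ring
    have h := ih.fun_add (cdf_deriv μ k t)
    have h2 : HasDerivAt (fun s => ∑ i ∈ Finset.range (k+1+1),
          (((k:ℝ)+1) - (i:ℝ)) * (Real.exp (-μ*s) * (μ*s)^i / Nat.factorial i))
        (-μ * ∑ i ∈ Finset.range (k+1),
          Real.exp (-μ*t) * (μ*t)^i / Nat.factorial i) t := by
      rw [hfe]
      refine h.congr_deriv ?_
      rw [Finset.sum_range_succ]
      ring
    convert h2 using 2 <;> push_cast <;> ring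

private lemma binom_mean (N : ℕ) (p : ℝ) :
    ∑ j ∈ Finset.range (N+1), (N.choose j : ℝ) * p^j * (1-p)^(N-j) * (j:ℝ)
      = N * p := by
  have h := bernsteinPolynomial.sum_smul ℝ N
  have h2 := congrArg (Polynomial.eval p) h
  simp only [Polynomial.eval_finset_sum, Polynomial.eval_smul, Polynomial.eval_natCast,
    bernsteinPolynomial, Polynomial.eval_mul, Polynomial.eval_pow, Polynomial.eval_sub,
    Polynomial.eval_one, Polynomial.eval_X, smul_eq_mul, nsmul_eq_mul] at h2
  rw [← h2]
  apply Finset.sum_congr rfl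
  intro j _
  ring

theorem stmt_14 (N : ℕ) (hN : 1 ≤ N) (α γ μ : ℝ)
    (hα : 0 < α) (hγ : 0 < γ) (hμ : 0 < μ) (h : α/μ > γ)
    (p₀ : ℝ) (hp₀ : p₀ = γ / (γ + α/μ))
    (q : ℝ → ℝ)
    (hq : ∀ t : ℝ, q t = ∑ j ∈ Finset.range (N+1),
      (N.choose j : ℝ) * p₀^j * (1-p₀)^(N-j) *
        ∑ i ∈ Finset.range (j+1),
          ((j:ℝ) - (i:ℝ)) * (Real.exp (-μ*t) * (μ*t)^i / (Nat.factorial i))) :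
    ∃! t : ℝ, 0 < t ∧
      (N * p₀ / 2) * (γ + α/μ) = N * p₀ * γ + (α/μ) * q t := by
  set r : ℝ := α/μ with hr
  have hrpos : 0 < r := div_pos hα hμ
  have hγr : γ < r := h
  have hsum : 0 < γ + r := by linarith
  have hp0pos : 0 < p₀ := by rw [hp₀]; exact div_pos hγ hsum
  have hp0half : p₀ < 1/2 := by
    rw [hp₀, div_lt_iff₀ hsum]; linarith
  have hp0lt1 : p₀ < 1 := by linarith
  have hN1 : (1:ℝ) ≤ (N:ℝ) := by exact_mod_cast hN
  -- q as explicit function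
  have hqf : q = fun t => ∑ j ∈ Finset.range (N+1),
      (N.choose j : ℝ) * p₀^j * (1-p₀)^(N-j) *
        ∑ i ∈ Finset.range (j+1),
          ((j:ℝ) - (i:ℝ)) * (Real.exp (-μ*t) * (μ*t)^i / (Nat.factorial i)) :=
    funext hq
  -- derivative of q
  have hqd : ∀ t : ℝ, HasDerivAt q
      (∑ j ∈ Finset.range (N+1),
        (N.choose j : ℝ) * p₀^j * (1-p₀)^(N-j) *
          (-μ * ∑ i ∈ Finset.range j,
            Real.exp (-μ*t) * (μ*t)^i / Nat.factorial i)) t := by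
    intro t
    rw [hqf]
    exact HasDerivAt.fun_sum fun j _ => (inner_deriv μ j t).const_mul _
  have hcontQ : Continuous q :=
    continuous_iff_continuousAt.2 fun t => (hqd t).differentiableAt.continuousAt
  -- derivative negative on (0, ∞)
  have hderiv_neg : ∀ t : ℝ, 0 < t →
      (∑ j ∈ Finset.range (N+1),
        (N.choose j : ℝ) * p₀^j * (1-p₀)^(N-j) *
          (-μ * ∑ i ∈ Finset.range j,
            Real.exp (-μ*t) * (μ*t)^i / Nat.factorial i)) < 0 := by
    intro t ht
    have hterm_pos : ∀ i : ℕ, 0 < Real.exp (-μ*t) * (μ*t)^i / Nat.factorial i := by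
      intro i
      have : (0:ℝ) < μ * t := mul_pos hμ ht
      positivity
    have key : 0 < ∑ j ∈ Finset.range (N+1),
        (N.choose j : ℝ) * p₀^j * (1-p₀)^(N-j) *
          (∑ i ∈ Finset.range j,
            Real.exp (-μ*t) * (μ*t)^i / Nat.factorial i) := by
      apply Finset.sum_pos'
      · intro j _
        have h1 : (0:ℝ) ≤ (N.choose j : ℝ) * p₀^j * (1-p₀)^(N-j) :=
          mul_nonneg (mul_nonneg (Nat.cast_nonneg _) (pow_nonneg hp0pos.le _))
            (pow_nonneg (by linarith) _)
        have h2 : (0:ℝ) ≤ ∑ i ∈ Finset.range j,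
            Real.exp (-μ*t) * (μ*t)^i / Nat.factorial i :=
          Finset.sum_nonneg fun i _ => (hterm_pos i).le
        exact mul_nonneg h1 h2
      · refine ⟨N, Finset.self_mem_range_succ N, ?_⟩
        have h1 : (0:ℝ) < (N.choose N : ℝ) * p₀^N * (1-p₀)^(N-N) := by
          simp only [Nat.choose_self, Nat.sub_self, pow_zero, Nat.cast_one, one_mul, mul_one]
          positivity
        have h2 : 0 < ∑ i ∈ Finset.range N,
            Real.exp (-μ*t) * (μ*t)^i / Nat.factorial i :=
          Finset.sum_pos (fun i _ => hterm_pos i)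
            (Finset.nonempty_range_iff.2 (by omega))
        exact mul_pos h1 h2
    have : (∑ j ∈ Finset.range (N+1),
        (N.choose j : ℝ) * p₀^j * (1-p₀)^(N-j) *
          (-μ * ∑ i ∈ Finset.range j,
            Real.exp (-μ*t) * (μ*t)^i / Nat.factorial i))
        = -μ * ∑ j ∈ Finset.range (N+1),
          (N.choose j : ℝ) * p₀^j * (1-p₀)^(N-j) *
            (∑ i ∈ Finset.range j,
              Real.exp (-μ*t) * (μ*t)^i / Nat.factorial i) := by
      rw [Finset.mul_sum]
      apply Finset.sum_congr rfl
      intro j _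
      ring
    rw [this]
    have := mul_pos hμ key
    nlinarith
  -- strict antitone
  have hanti : StrictAntiOn q (Set.Ici (0:ℝ)) := by
    apply strictAntiOn_of_deriv_neg (convex_Ici 0) hcontQ.continuousOn
    intro x hx
    rw [interior_Ici] at hx
    rw [(hqd x).deriv]
    exact hderiv_neg x hx
  -- q 0 = N p₀
  have hq0 : q 0 = N * p₀ := by
    rw [hq 0]
    have hinner : ∀ j ∈ Finset.range (N+1),
        (N.choose j : ℝ) * p₀^j * (1-p₀)^(N-j) *
          (∑ i ∈ Finset.range (j+1),
            ((j:ℝ) - (i:ℝ)) * (Real.exp (-μ*0) * (μ*0)^i / Nat.factorial i))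
        = (N.choose j : ℝ) * p₀^j * (1-p₀)^(N-j) * (j:ℝ) := by
      intro j _
      congr 1
      rw [Finset.sum_eq_single 0]
      · simp
      · intro b _ hb
        simp [zero_pow hb]
      · intro hcon
        exact absurd (Finset.mem_range.2 (Nat.succ_pos j)) hcon
    rw [Finset.sum_congr rfl hinner]
    exact binom_mean N p₀
  -- q tends to 0
  have hT0lim : ∀ i : ℕ, Filter.Tendsto
      (fun t => Real.exp (-μ*t) * (μ*t)^i / Nat.factorial i)
      Filter.atTop (nhds 0) := by
    intro i
    have h1 : Filter.Tendsto (fun x : ℝ => x^i * Real.exp (-x))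
        Filter.atTop (nhds 0) := tendsto_pow_mul_exp_neg_atTop_nhds_zero i
    have h2 : Filter.Tendsto (fun t : ℝ => μ * t) Filter.atTop Filter.atTop :=
      Filter.Tendsto.const_mul_atTop hμ Filter.tendsto_id
    have h3 := (h1.comp h2).div_const (Nat.factorial i : ℝ)
    have : (fun t : ℝ => Real.exp (-μ*t) * (μ*t)^i / Nat.factorial i)
        = fun t => ((fun x : ℝ => x^i * Real.exp (-x)) ∘ (fun t : ℝ => μ * t)) t
            / (Nat.factorial i : ℝ) := by
      funext t
      simp only [Function.comp]
      rw [neg_mul]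
      ring
    rw [this]
    simpa using h3
  have hlim : Filter.Tendsto q Filter.atTop (nhds 0) := by
    rw [hqf]
    have hmain : Filter.Tendsto (fun t => ∑ j ∈ Finset.range (N+1),
        (N.choose j : ℝ) * p₀^j * (1-p₀)^(N-j) *
          ∑ i ∈ Finset.range (j+1),
            ((j:ℝ) - (i:ℝ)) * (Real.exp (-μ*t) * (μ*t)^i / Nat.factorial i))
        Filter.atTop (nhds (∑ j ∈ Finset.range (N+1),
        (N.choose j : ℝ) * p₀^j * (1-p₀)^(N-j) *
          ∑ i ∈ Finset.range (j+1),
            ((j:ℝ) - (i:ℝ)) * (0:ℝ))) := by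
      apply tendsto_finset_sum
      intro j _
      apply Filter.Tendsto.const_mul
      apply tendsto_finset_sum
      intro i _
      exact (hT0lim i).const_mul _
    simpa using hmain
  -- target value y
  set y : ℝ := ((N:ℝ) * p₀ / 2 * (γ + r) - (N:ℝ) * p₀ * γ) / r with hy
  have hNp0 : 0 < (N:ℝ) * p₀ := by positivity
  have hypos : 0 < y := by
    rw [hy]
    apply div_pos _ hrpos
    nlinarith
  have hylt : y < (N:ℝ) * p₀ := by
    rw [hy, div_lt_iff₀ hrpos]
    nlinarith
  have hequiv : ∀ t : ℝ, ((N:ℝ) * p₀ / 2) * (γ + r) = (N:ℝ) * p₀ * γ + r * q t ↔ q t = y := by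
    intro t
    rw [hy, eq_div_iff hrpos.ne']
    constructor <;> intro h' <;> nlinarith [h']
  -- find T with q T < y
  obtain ⟨T, hTpos, hTy⟩ : ∃ T : ℝ, 0 < T ∧ q T < y := by
    have h1 : ∀ᶠ t in Filter.atTop, q t < y := hlim.eventually_lt_const hypos
    obtain ⟨T, hT⟩ := (h1.and (Filter.eventually_gt_atTop 0)).exists
    exact ⟨T, hT.2, hT.1⟩
  -- IVT
  have hmem : y ∈ Set.Ioo (q T) (q 0) := ⟨hTy, by rw [hq0]; exact hylt⟩
  obtain ⟨t, htIoo, hqt⟩ := intermediate_value_Ioo' hTpos.le hcontQ.continuousOn hmem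
  refine ⟨t, ⟨htIoo.1, ?_⟩, ?_⟩
  · exact (hequiv t).2 hqt
  · rintro t' ⟨ht'pos, heq'⟩
    have hq' : q t' = y := (hequiv t').1 heq'
    have : q t' = q t := by rw [hq', hqt]
    exact hanti.injOn (Set.mem_Ici.2 ht'pos.le) (Set.mem_Ici.2 htIoo.1.le) this
end

section
/- Let μ > 0 and T = 1. Define t* = (1/μ)·log((1 + √(1 + 4e^{μ}))/2) if this quantity is ≤ 1, and t* = 1 otherwise. Then t* minimizes over t ∈ [0, 1] the function Φ(t) = e^{−μt} + e^{−μ}(1 + μ − μt + e^{μt}), which is the total expected waiting (in units of α/μ·μ = α) for three customers scheduled at times 0, t, 1 with exponential(μ) services. -/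
open Real Set

set_option maxHeartbeats 1000000 in
theorem stmt_17 (μ : ℝ) (hμ : 0 < μ) (tstar : ℝ)
    (htstar : tstar =
      if (1/μ) * Real.log ((1 + Real.sqrt (1 + 4 * Real.exp μ)) / 2) ≤ 1
      then (1/μ) * Real.log ((1 + Real.sqrt (1 + 4 * Real.exp μ)) / 2)
      else 1) :
    tstar ∈ Set.Icc (0:ℝ) 1 ∧
      ∀ t ∈ Set.Icc (0:ℝ) 1,
        Real.exp (-μ*tstar) + Real.exp (-μ) * (1 + μ - μ*tstar + Real.exp (μ*tstar))
          ≤ Real.exp (-μ*t) + Real.exp (-μ) * (1 + μ - μ*t + Real.exp (μ*t)) := by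
  have hE1 : 1 < Real.exp μ := by
    have := Real.add_one_lt_exp (ne_of_gt hμ); linarith
  set E := Real.exp μ with hE
  have hE0 : 0 < E := by linarith
  have hs0 : 0 ≤ Real.sqrt (1 + 4*E) := Real.sqrt_nonneg _
  have hs2 : (Real.sqrt (1 + 4*E))^2 = 1 + 4*E := Real.sq_sqrt (by linarith)
  set s := Real.sqrt (1 + 4*E) with hsdef
  have hs1 : 1 ≤ s := by nlinarith
  set c := (1 + s)/2 with hcdef
  have hc1 : 1 ≤ c := by rw [hcdef]; linarith
  have hc0 : 0 < c := by linarith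
  have hcE : c * (c - 1) = E := by rw [hcdef]; nlinarith
  have hlogc : 0 ≤ Real.log c := Real.log_nonneg hc1
  -- membership
  have h01 : tstar ∈ Set.Icc (0:ℝ) 1 := by
    rw [htstar]
    split_ifs with h
    · exact ⟨by positivity, h⟩
    · exact ⟨zero_le_one, le_refl 1⟩
  -- key algebraic lemma
  have key : ∀ x y : ℝ, 1 ≤ x → 0 < y → 0 ≤ (y - x) * (y * (x - 1) - E) →
      1/x + (x - Real.log x)/E ≤ 1/y + (y - Real.log y)/E := by
    intro x y hx hy hprod
    have hx0 : 0 < x := by linarith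
    have hlog : Real.log y - Real.log x + 1 ≤ y/x := by
      have h := Real.log_le_sub_one_of_pos (div_pos hy hx0)
      rw [Real.log_div (ne_of_gt hy) (ne_of_gt hx0)] at h
      linarith
    have hlog2 : (Real.log y - Real.log x + 1) * x ≤ y := (le_div_iff₀ hx0).mp hlog
    rw [div_add_div _ _ (ne_of_gt hx0) (ne_of_gt hE0),
        div_add_div _ _ (ne_of_gt hy) (ne_of_gt hE0),
        div_le_div_iff₀ (by positivity) (by positivity)]
    nlinarith [mul_le_mul_of_nonneg_left hlog2 hy.le, hprod, hE0, mul_pos hx0 hy]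
  -- rewrite of Phi
  have hφ : ∀ t : ℝ, Real.exp (-μ*t) + Real.exp (-μ) * (1 + μ - μ*t + Real.exp (μ*t)) =
      1/Real.exp (μ*t) + (1+μ)/E + (Real.exp (μ*t) - Real.log (Real.exp (μ*t)))/E := by
    intro t
    rw [Real.log_exp, show -μ*t = -(μ*t) by ring, Real.exp_neg, Real.exp_neg]
    have h1 : Real.exp (μ*t) ≠ 0 := (Real.exp_pos _).ne'
    rw [← hE]
    field_simp
    ring
  refine ⟨h01, ?_⟩
  intro t ht
  rw [hφ tstar, hφ t]
  have hx1 : 1 ≤ Real.exp (μ*tstar) := Real.one_le_exp (by nlinarith [h01.1])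
  have hy0 : 0 < Real.exp (μ*t) := Real.exp_pos _
  have hy1 : 1 ≤ Real.exp (μ*t) := Real.one_le_exp (by nlinarith [ht.1])
  have hyE : Real.exp (μ*t) ≤ E := by
    rw [hE]; exact Real.exp_le_exp.mpr (by nlinarith [ht.2])
  have hmain : 1/Real.exp (μ*tstar) + (Real.exp (μ*tstar) - Real.log (Real.exp (μ*tstar)))/E
      ≤ 1/Real.exp (μ*t) + (Real.exp (μ*t) - Real.log (Real.exp (μ*t)))/E := by
    apply key _ _ hx1 hy0
    set y := Real.exp (μ*t) with hy
    rw [htstar]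
    split_ifs with h
    · have hxc : Real.exp (μ * ((1/μ) * Real.log c)) = c := by
        rw [show μ * ((1/μ) * Real.log c) = Real.log c by field_simp, Real.exp_log hc0]
      rw [hxc]
      nlinarith [sq_nonneg (y - c), hc1, hcE]
    · push_neg at h
      have hmu : μ < Real.log c := by
        have h2 : μ * 1 < μ * ((1/μ) * Real.log c) := by
          exact (mul_lt_mul_iff_right₀ hμ).mpr h
        rw [show μ * ((1/μ) * Real.log c) = Real.log c by field_simp] at h2
        linarith
      have hEc : E < c := by
        rw [hE]
        calc Real.exp μ < Real.exp (Real.log c) := Real.exp_lt_exp.mpr hmu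
        _ = c := Real.exp_log hc0
      have hEE : E * (E - 1) ≤ E := by nlinarith [hcE, hEc, hE1]
      have hx1e : Real.exp (μ * 1) = E := by rw [hE, mul_one]
      rw [hx1e]
      nlinarith [mul_le_mul_of_nonneg_right hyE (by linarith : (0:ℝ) ≤ E - 1), hEE, hyE]
  linarith
end
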